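/- Let 𝔄 be a Boolean algebra with a completely additive operator ◇, with dual □x = ¬◇¬x. If for every x ∈ 𝔄 the inequality □◇⊤ ≤ □(□(□x → x) → x) holds, then □◇⊤ ≤ □⊥. (Algebraic statement that every completely additive modal algebra validating the van Benthem axiom validates □◇⊤ → □⊥.) -/
import Mathlib


/-- The dual box of an operator `f` on a Boolean algebra. -/
def mbox {α : Type*} [BooleanAlgebra α] (f : α → α) (x : α) : α := (f xᶜ)ᶜ

/-- Every completely additive modal algebra validating the van Benthem axiom
`□◇⊤ → □(□(□p → p) → p)` satisfies `□◇⊤ ≤ □⊥`. -/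
theorem stmt_8 {α : Type*} [BooleanAlgebra α] (f : α → α)
    (hjoin : ∀ x y : α, f (x ⊔ y) = f x ⊔ f y) (hbot : f ⊥ = ⊥)
    (hV : ∀ (X : Set α) (s : α), IsLUB X s → IsLUB (f '' X) (f s))
    (hax : ∀ x : α, mbox f (f ⊤) ≤ mbox f ((mbox f ((mbox f x)ᶜ ⊔ x))ᶜ ⊔ x)) :
    mbox f (f ⊤) ≤ mbox f ⊥ := by
  have hmono : ∀ a b : α, a ≤ b → f a ≤ f b := by
    intro a b hab
    have h1 : f b = f a ⊔ f b := by rw [← hjoin, sup_eq_right.mpr hab]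
    rw [h1]; exact le_sup_left
  set w : α := mbox f (f ⊤) with hw
  simp only [mbox, compl_bot]
  by_contra hcon
  have hft : ¬ f ⊤ ≤ wᶜ := by
    intro h'
    exact hcon (le_compl_comm.mp h')
  -- complete additivity: there is a nonzero a₀ with ∀ nonzero b ≤ a₀, ¬ f b ≤ wᶜ
  obtain ⟨a₀, ha₀ne, ha₀⟩ : ∃ a₀ : α, a₀ ≠ ⊥ ∧ ∀ b : α, b ≠ ⊥ → b ≤ a₀ → ¬ f b ≤ wᶜ := by
    by_contra hc
    push_neg at hc
    set X : Set α := {x : α | f x ≤ wᶜ} with hX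
    have hlub : IsLUB X ⊤ := by
      constructor
      · intro x _; exact le_top
      · intro u hu
        by_contra hu'
        have hune : uᶜ ≠ ⊥ := by
          intro h0
          exact hu' (le_of_eq (compl_eq_bot.mp h0).symm)
        obtain ⟨b, hbne, hble, hbf⟩ := hc uᶜ hune
        have hbu : b ≤ u := hu hbf
        have : b ≤ ⊥ := by
          have := le_inf hbu hble
          rwa [inf_compl_eq_bot] at this
        exact hbne (le_bot_iff.mp this)
    have h2 : IsLUB (f '' X) (f ⊤) := hV X ⊤ hlub
    have : f ⊤ ≤ wᶜ := h2.2 (by rintro _ ⟨x, hx, rfl⟩; exact hx)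
    exact hft this
  -- key consequence of the axiom: nonzero a ≤ a₀ gives a ≤ f (a ⊓ (f a)ᶜ)
  have key : ∀ a : α, a ≠ ⊥ → a ≤ a₀ → a ≤ f (a ⊓ (f a)ᶜ) := by
    intro a hane hale
    have hx := hax aᶜ
    simp only [mbox, compl_compl, compl_sup] at hx
    -- hx : w ≤ (f ((f ((f a)ᶜ ⊓ a))ᶜ ⊓ a))ᶜ
    have hx' : f ((f ((f a)ᶜ ⊓ a))ᶜ ⊓ a) ≤ wᶜ := le_compl_comm.mp hx
    set c : α := (f ((f a)ᶜ ⊓ a))ᶜ ⊓ a with hc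
    have hcbot : c = ⊥ := by
      by_contra hcne
      exact ha₀ c hcne (inf_le_right.trans hale) hx'
    have : a ⊓ (f ((f a)ᶜ ⊓ a))ᶜ = ⊥ := by rw [inf_comm]; exact hcbot
    have hle : a ≤ f ((f a)ᶜ ⊓ a) := by
      have := (disjoint_iff.mpr this).le_compl_right
      rwa [compl_compl] at this
    rwa [inf_comm] at hle
  have h1 : a₀ ≤ f (a₀ ⊓ (f a₀)ᶜ) := key a₀ ha₀ne le_rfl
  set b : α := a₀ ⊓ (f a₀)ᶜ with hb
  have hbne : b ≠ ⊥ := by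
    intro h0
    rw [h0, hbot] at h1
    exact ha₀ne (le_bot_iff.mp h1)
  have hble : b ≤ a₀ := inf_le_left
  have h2 : b ≤ f (b ⊓ (f b)ᶜ) := key b hbne hble
  have h3 : b ≤ f a₀ := h2.trans (hmono _ _ (inf_le_left.trans hble))
  have h4 : b ≤ f a₀ ⊓ (f a₀)ᶜ := le_inf h3 inf_le_right
  rw [inf_compl_eq_bot] at h4
  exact hbne (le_bot_iff.mp h4)
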